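/- Let R → S be a semicontent algebra such that R_p is a fidel (A)-ring for every prime p of R. Then R → S is residually McCoy, i.e., R/I → S/IS is McCoy for every ideal I of R. -/

import Mathlib

/-- The Ohm-Rush content of `f ∈ S`: the intersection of all ideals `I` of `R`
with `f ∈ IS`. -/
def orContent (R : Type*) [CommRing R] {S : Type*} [CommRing S] [Algebra R S] (f : S) :
    Ideal R :=
  sInf {I : Ideal R | f ∈ I.map (algebraMap R S)}

/-- `S` is an Ohm-Rush `R`-algebra if each `f ∈ S` lies in `c(f)S`,
i.e. there is a minimal ideal `I` with `f ∈ IS`. -/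
def IsOhmRush (R S : Type*) [CommRing R] [CommRing S] [Algebra R S] : Prop :=
  ∀ f : S, f ∈ (orContent R f).map (algebraMap R S)

/-- `S` is a McCoy `R`-algebra if whenever `f * g = 0` with `g ≠ 0`,
some nonzero `r ∈ R` annihilates the content of `f`. -/
def IsMcCoy (R S : Type*) [CommRing R] [CommRing S] [Algebra R S] : Prop :=
  ∀ f g : S, f * g = 0 → g ≠ 0 → ∃ r : R, r ≠ 0 ∧ ∀ a ∈ orContent R f, r * a = 0

/-- `S` is a weak content `R`-algebra: Ohm-Rush and `rad c(fg) = rad (c(f)c(g))`. -/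
def IsWeakContent (R S : Type*) [CommRing R] [CommRing S] [Algebra R S] : Prop :=
  IsOhmRush R S ∧ ∀ f g : S,
    (orContent R (f * g)).radical = (orContent R f * orContent R g).radical

/-- Property (A): every finitely generated ideal consisting of zero-divisors
has a nonzero annihilator. -/
def HasPropertyA (R : Type*) [CommRing R] : Prop :=
  ∀ J : Ideal R, J.FG → (∀ a ∈ J, a ∉ nonZeroDivisors R) →
    ∃ r : R, r ≠ 0 ∧ ∀ a ∈ J, a * r = 0

/-- Fidel (A): every quotient has property (A). -/
def HasFidelA (R : Type*) [CommRing R] : Prop :=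
  ∀ I : Ideal R, HasPropertyA (R ⧸ I)

/-- `S` is a semicontent `R`-algebra: faithfully flat, Ohm-Rush, and for every
multiplicative set `W ⊆ R` meeting `c(f)`, `c(fg)` and `c(g)` agree after
localizing at `W`. -/
def IsSemicontent (R S : Type*) [CommRing R] [CommRing S] [Algebra R S] : Prop :=
  Module.FaithfullyFlat R S ∧ IsOhmRush R S ∧
    ∀ (W : Submonoid R) (f g : S), (∃ w ∈ W, w ∈ orContent R f) →
      (orContent R (f * g)).map (algebraMap R (Localization W)) =
        (orContent R g).map (algebraMap R (Localization W))


section AuxLemmas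

variable {R S : Type*} [CommRing R] [CommRing S] [Algebra R S]

theorem orContent_fg (f : S) (hf : f ∈ (orContent R f).map (algebraMap R S)) :
    (orContent R f).FG := by
  rw [show (orContent R f).map (algebraMap R S)
      = Submodule.span S ((algebraMap R S) '' (orContent R f)) from rfl] at hf
  obtain ⟨T, hTsub, hTf⟩ := Submodule.mem_span_finite_of_mem_span hf
  have hch : ∀ t : S, ∃ a : R, t ∈ (T : Set S) → a ∈ orContent R f ∧ algebraMap R S a = t := by
    intro t
    by_cases ht : t ∈ (T : Set S)
    · obtain ⟨a, ha, hat⟩ := hTsub ht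
      exact ⟨a, fun _ => ⟨ha, hat⟩⟩
    · exact ⟨0, fun h => absurd h ht⟩
  choose σ hσ using hch
  classical
  refine ⟨T.image σ, le_antisymm ?_ ?_⟩
  · rw [Ideal.span_le]
    intro a ha
    simp only [Finset.coe_image, Set.mem_image, Finset.mem_coe] at ha
    obtain ⟨t, ht, rfl⟩ := ha
    exact (hσ t ht).1
  · apply sInf_le
    show f ∈ (Ideal.span (↑(T.image σ) : Set R)).map (algebraMap R S)
    refine Submodule.span_le.mpr ?_ hTf
    intro t ht
    have h1 : algebraMap R S (σ t) = t := (hσ t ht).2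
    have h2 : σ t ∈ Ideal.span (↑(T.image σ) : Set R) := by
      apply Ideal.subset_span
      simp only [Finset.coe_image, Set.mem_image, Finset.mem_coe]
      exact ⟨t, ht, rfl⟩
    have := Ideal.mem_map_of_mem (algebraMap R S) h2
    rwa [h1] at this

variable (I : Ideal R)

theorem map_commute_quot (J : Ideal R) :
    (J.map (Ideal.Quotient.mk I)).map (algebraMap (R ⧸ I) (S ⧸ I.map (algebraMap R S)))
      = (J.map (algebraMap R S)).map (Ideal.Quotient.mk (I.map (algebraMap R S))) := by
  rw [Ideal.map_map, Ideal.map_map]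
  congr 1

theorem orContent_quot (hOR : IsOhmRush R S) (h : S) :
    orContent (R ⧸ I) (Ideal.Quotient.mk (I.map (algebraMap R S)) h)
      = (orContent R h).map (Ideal.Quotient.mk I) := by
  apply le_antisymm
  · apply sInf_le
    show Ideal.Quotient.mk (I.map (algebraMap R S)) h ∈
      ((orContent R h).map (Ideal.Quotient.mk I)).map
        (algebraMap (R ⧸ I) (S ⧸ I.map (algebraMap R S)))
    rw [map_commute_quot]
    exact Ideal.mem_map_of_mem _ (hOR h)
  · refine le_sInf fun J' hJ' => ?_
    have hsurj : Function.Surjective (Ideal.Quotient.mk I) := Ideal.Quotient.mk_surjective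
    have hJc : (J'.comap (Ideal.Quotient.mk I)).map (Ideal.Quotient.mk I) = J' :=
      Ideal.map_comap_of_surjective _ hsurj J'
    simp only [Set.mem_setOf_eq] at hJ'
    rw [← hJc] at hJ' ⊢
    rw [map_commute_quot] at hJ'
    obtain ⟨y, hy, hyx⟩ := (Ideal.mem_map_iff_of_surjective
      (Ideal.Quotient.mk (I.map (algebraMap R S))) Ideal.Quotient.mk_surjective).mp hJ'
    have hsub : y - h ∈ (I.map (algebraMap R S) : Ideal S) := Ideal.Quotient.eq.mp hyx
    have hIle : I ≤ J'.comap (Ideal.Quotient.mk I) := by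
      intro i hi
      simp only [Ideal.mem_comap]
      rw [Ideal.Quotient.eq_zero_iff_mem.mpr hi]
      exact J'.zero_mem
    have hh : h ∈ (J'.comap (Ideal.Quotient.mk I)).map (algebraMap R S) := by
      have h1 : y - h ∈ (J'.comap (Ideal.Quotient.mk I)).map (algebraMap R S) :=
        Ideal.map_mono hIle hsub
      have := Submodule.sub_mem _ hy h1
      simpa using this
    exact Ideal.map_mono (sInf_le hh)

theorem isOhmRush_quot (hOR : IsOhmRush R S) :
    IsOhmRush (R ⧸ I) (S ⧸ I.map (algebraMap R S)) := by
  intro f'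
  obtain ⟨h, rfl⟩ := Ideal.Quotient.mk_surjective f'
  rw [orContent_quot I hOR, map_commute_quot]
  exact Ideal.mem_map_of_mem _ (hOR h)

theorem semicontent_W_quot (hOR : IsOhmRush R S)
    (hW : ∀ (W : Submonoid R) (f g : S), (∃ w ∈ W, w ∈ orContent R f) →
      (orContent R (f * g)).map (algebraMap R (Localization W)) =
        (orContent R g).map (algebraMap R (Localization W))) :
    ∀ (W' : Submonoid (R ⧸ I)) (f' g' : S ⧸ I.map (algebraMap R S)),
      (∃ w ∈ W', w ∈ orContent (R ⧸ I) f') →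
      (orContent (R ⧸ I) (f' * g')).map (algebraMap (R ⧸ I) (Localization W')) =
        (orContent (R ⧸ I) g').map (algebraMap (R ⧸ I) (Localization W')) := by
  intro W' f' g' ⟨w', hw'W, hw'c⟩
  obtain ⟨f, rfl⟩ := Ideal.Quotient.mk_surjective f'
  obtain ⟨g, rfl⟩ := Ideal.Quotient.mk_surjective g'
  have hfg : Ideal.Quotient.mk (I.map (algebraMap R S)) f *
      Ideal.Quotient.mk (I.map (algebraMap R S)) g =
      Ideal.Quotient.mk (I.map (algebraMap R S)) (f * g) := (map_mul _ f g).symm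
  rw [hfg, orContent_quot I hOR, orContent_quot I hOR]
  rw [orContent_quot I hOR] at hw'c
  obtain ⟨a, hac, haq⟩ := (Ideal.mem_map_iff_of_surjective
    (Ideal.Quotient.mk I) Ideal.Quotient.mk_surjective).mp hw'c
  set W := W'.comap (Ideal.Quotient.mk I : R →+* R ⧸ I) with hWdef
  have haW : a ∈ W := by
    rw [hWdef, Submonoid.mem_comap]
    show Ideal.Quotient.mk I a ∈ W'
    rw [haq]; exact hw'W
  have hloc := hW W f g ⟨a, haW, hac⟩
  set φ := (algebraMap (R ⧸ I) (Localization W')).comp (Ideal.Quotient.mk I : R →+* R ⧸ I)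
    with hφdef
  have hu : ∀ y : W, IsUnit (φ y) :=
    fun y => IsLocalization.map_units _ (⟨Ideal.Quotient.mk I y, y.2⟩ : W')
  have key : ∀ J : Ideal R,
      (J.map (Ideal.Quotient.mk I)).map (algebraMap (R ⧸ I) (Localization W'))
        = (J.map (algebraMap R (Localization W))).map (IsLocalization.lift hu) := by
    intro J
    rw [Ideal.map_map, Ideal.map_map, IsLocalization.lift_comp]
  rw [key, key, hloc]

end AuxLemmas

section PropATransfer

theorem hasPropertyA_equiv {A B : Type*} [CommRing A] [CommRing B] (e : A ≃+* B)
    (h : HasPropertyA A) : HasPropertyA B := by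
  intro J hJfg hJzd
  have hJ0fg : (J.comap (e : A →+* B)).FG := by
    have hcm : J.comap (e : A →+* B) = J.map (e.symm : B →+* A) := by
      ext x
      simp only [Ideal.mem_comap]
      constructor
      · intro hx
        have := Ideal.mem_map_of_mem (e.symm : B →+* A) hx
        simpa using this
      · intro hx
        obtain ⟨y, hy, rfl⟩ := (Ideal.mem_map_iff_of_surjective (e.symm : B →+* A)
          e.symm.surjective).mp hx
        simpa using hy
    rw [hcm]
    exact Ideal.FG.map hJfg _
  have hJ0zd : ∀ a ∈ J.comap (e : A →+* B), a ∉ nonZeroDivisors A := by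
    intro a ha hnzd
    refine hJzd (e a) ha ?_
    rw [mem_nonZeroDivisors_iff_right] at hnzd ⊢
    intro x hx
    have h1 : e.symm x * a = 0 := by
      have := congrArg e.symm hx
      simpa [map_mul] using this
    have h2 := hnzd _ h1
    have := congrArg e h2
    simpa using this
  obtain ⟨r, hr0, hrann⟩ := h _ hJ0fg hJ0zd
  refine ⟨e r, fun h0 => hr0 (by simpa using congrArg e.symm h0), ?_⟩
  intro b hb
  have hb' : e.symm b ∈ J.comap (e : A →+* B) := by
    rw [Ideal.mem_comap]
    show e (e.symm b) ∈ J
    simpa using hb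
  have h3 := hrann _ hb'
  have := congrArg e h3
  simpa [map_mul] using this

theorem hasPropertyA_of_surj {A B : Type*} [CommRing A] [CommRing B] (ρ : A →+* B)
    (hρ : Function.Surjective ρ) (h : HasFidelA A) : HasPropertyA B :=
  hasPropertyA_equiv (RingHom.quotientKerEquivOfSurjective hρ) (h _)

theorem loc_surj {R R' : Type*} [CommRing R] [CommRing R'] (q : R →+* R')
    (hq : Function.Surjective q) (W' : Submonoid R') :
    ∃ ρ : Localization (W'.comap q) →+* Localization W', Function.Surjective ρ := by
  set W := W'.comap q with hW
  have hu : ∀ y : W, IsUnit (((algebraMap R' (Localization W')).comp q) y) :=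
    fun y => IsLocalization.map_units _ (⟨q y, y.2⟩ : W')
  refine ⟨IsLocalization.lift hu, fun z => ?_⟩
  obtain ⟨⟨r', m'⟩, hz⟩ := IsLocalization.mk'_surjective W' z
  simp only at hz
  obtain ⟨a, ha⟩ := hq r'
  obtain ⟨w, hw⟩ := hq (m' : R')
  have hwW : w ∈ W := by
    rw [hW, Submonoid.mem_comap, hw]
    exact m'.2
  refine ⟨IsLocalization.mk' (Localization W) a ⟨w, hwW⟩, ?_⟩
  rw [IsLocalization.lift_mk'_spec]
  show algebraMap R' (Localization W') (q a) = algebraMap R' (Localization W') (q w) * z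
  rw [ha, hw, ← hz, mul_comm, IsLocalization.mk'_spec]

end PropATransfer

/-- If `R → S` is a semicontent algebra and `R_p` is a fidel (A)-ring for every
prime `p` of `R`, then `R → S` is residually McCoy: `R/I → S/IS` is McCoy for
every ideal `I` of `R`. -/
theorem stmt_10 (R S : Type*) [CommRing R] [CommRing S] [Algebra R S]
    (hsc : IsSemicontent R S)
    (hA : ∀ (p : Ideal R) (hp : p.IsPrime),
      haveI := hp
      HasFidelA (Localization p.primeCompl)) :
    ∀ I : Ideal R, IsMcCoy (R ⧸ I) (S ⧸ I.map (algebraMap R S)) := by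
  obtain ⟨hff, hOR, hWcond⟩ := hsc
  intro I f' g' hfg0 hgne
  have hORq := isOhmRush_quot I hOR
  have hWq := semicontent_W_quot I hOR hWcond
  by_contra hno
  push_neg at hno
  have hcffg : (orContent (R ⧸ I) f').FG := orContent_fg f' (hORq f')
  obtain ⟨T₀, hT₀⟩ := hcffg
  classical
  -- key: for every prime p of R ⧸ I and b in the content of g', some v outside p kills b
  have key : ∀ (p : Ideal (R ⧸ I)), p.IsPrime →
      ∀ b ∈ orContent (R ⧸ I) g', ∃ v, v ∉ p ∧ v * b = 0 := by
    intro p hp b hb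
    haveI := hp
    have hPA : HasPropertyA (Localization p.primeCompl) := by
      have hp0 : (p.comap (Ideal.Quotient.mk I)).IsPrime := Ideal.IsPrime.comap _
      haveI := hp0
      have hFA := hA _ hp0
      have hcompl : p.primeCompl.comap (Ideal.Quotient.mk I : R →+* R ⧸ I)
          = (p.comap (Ideal.Quotient.mk I)).primeCompl := by
        ext x
        simp [Ideal.primeCompl, Submonoid.mem_comap, Ideal.mem_comap]
      rw [← hcompl] at hFA
      obtain ⟨ρ, hρ⟩ := loc_surj (Ideal.Quotient.mk I : R →+* R ⧸ I)
        Ideal.Quotient.mk_surjective p.primeCompl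
      exact hasPropertyA_of_surj ρ hρ hFA
    set Lp := Localization p.primeCompl with hLp
    set algp := algebraMap (R ⧸ I) Lp with halgp
    by_cases hzd : ∀ x ∈ (orContent (R ⧸ I) f').map algp, x ∉ nonZeroDivisors Lp
    · exfalso
      obtain ⟨rp, hrp0, hrpann⟩ := hPA _ (Ideal.FG.map ⟨T₀, hT₀⟩ _) hzd
      obtain ⟨⟨x, u⟩, hxu⟩ := IsLocalization.mk'_surjective p.primeCompl rp
      have huu : IsUnit (algp (u : R ⧸ I)) := IsLocalization.map_units _ u
      have hrpspec : rp * algp (u : R ⧸ I) = algp x := by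
        rw [← hxu]; exact IsLocalization.mk'_spec Lp x u
      have hx0 : algp x ≠ 0 := by
        intro h0
        apply hrp0
        rw [← hrpspec] at h0
        exact (huu.mul_left_eq_zero).mp h0
      have hgen : ∀ t : R ⧸ I, ∃ w : R ⧸ I,
          t ∈ T₀ → w ∉ p ∧ w * (t * x) = 0 := by
        intro t
        by_cases ht : t ∈ T₀
        · have htc : t ∈ orContent (R ⧸ I) f' := by
            rw [← hT₀]; exact Ideal.subset_span ht
          have h1 : algp t * rp = 0 := hrpann _ (Ideal.mem_map_of_mem _ htc)
          have h2 : algp (t * x) = 0 := by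
            rw [map_mul, ← hrpspec]
            calc algp t * (rp * algp (u : R ⧸ I))
                = (algp t * rp) * algp (u : R ⧸ I) := by ring
              _ = 0 := by rw [h1, zero_mul]
          obtain ⟨m, hm⟩ := (IsLocalization.map_eq_zero_iff p.primeCompl Lp _).mp h2
          exact ⟨m, fun _ => ⟨m.2, hm⟩⟩
        · exact ⟨1, fun h => absurd h ht⟩
      choose wf hwf using hgen
      set w := ∏ t ∈ T₀, wf t with hwdef
      have hwP : w ∉ p := by
        have : w ∈ p.primeCompl := Submonoid.prod_mem _ (fun t ht => (hwf t ht).1)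
        exact this
      set r := x * w with hrdef
      have hr0 : r ≠ 0 := by
        intro h0
        apply hx0
        rw [IsLocalization.map_eq_zero_iff p.primeCompl Lp x]
        refine ⟨⟨w, hwP⟩, ?_⟩
        show w * x = 0
        rw [mul_comm]; rw [hrdef] at h0; exact h0
      have hrann : ∀ a ∈ orContent (R ⧸ I) f', r * a = 0 := by
        have hle : orContent (R ⧸ I) f' ≤ LinearMap.ker (LinearMap.mulLeft (R ⧸ I) r) := by
          rw [← hT₀, Ideal.span_le]
          intro t ht
          simp only [SetLike.mem_coe, LinearMap.mem_ker, LinearMap.mulLeft_apply]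
          have h3 := (hwf t ht).2
          have h4 : r * t = (∏ t' ∈ T₀.erase t, wf t') * (wf t * (t * x)) := by
            rw [hrdef, hwdef, ← Finset.mul_prod_erase T₀ wf ht]; ring
          rw [h4, h3, mul_zero]
        intro a ha
        simpa using hle ha
      obtain ⟨a, hac, hne⟩ := hno r hr0
      exact hne (hrann a hac)
    · push_neg at hzd
      obtain ⟨ν, hνJ, hνnzd⟩ := hzd
      obtain ⟨⟨⟨a, hac⟩, u⟩, hau⟩ :=
        (IsLocalization.mem_map_algebraMap_iff p.primeCompl Lp).mp hνJ
      have hanzd : algp a ∈ nonZeroDivisors Lp := by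
        rw [← hau]
        exact mul_mem hνnzd (IsLocalization.map_units Lp u).mem_nonZeroDivisors
      set W := (nonZeroDivisors Lp).comap (algp : (R ⧸ I) →+* Lp) with hWdef
      have haW : a ∈ W := by
        rw [hWdef, Submonoid.mem_comap]
        exact hanzd
      have hcond := hWq W f' g' ⟨a, haW, hac⟩
      rw [hfg0] at hcond
      have hc0 : orContent (R ⧸ I) (0 : S ⧸ I.map (algebraMap R S)) = ⊥ := by
        apply le_bot_iff.mp
        apply sInf_le
        show (0 : S ⧸ I.map (algebraMap R S)) ∈ (⊥ : Ideal (R ⧸ I)).map _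
        simp
      rw [hc0, Ideal.map_bot] at hcond
      have hb0 : algebraMap (R ⧸ I) (Localization W) b = 0 := by
        have h5 := Ideal.mem_map_of_mem (algebraMap (R ⧸ I) (Localization W)) hb
        rw [← hcond] at h5
        simpa using h5
      obtain ⟨m, hm⟩ := (IsLocalization.map_eq_zero_iff W (Localization W) b).mp hb0
      have hmb : algp ((m : R ⧸ I) * b) = 0 := by rw [hm, map_zero]
      have hb00 : algp b = 0 := by
        have hmn : algp (m : R ⧸ I) ∈ nonZeroDivisors Lp := m.2
        rw [mem_nonZeroDivisors_iff_right] at hmn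
        apply hmn
        rw [map_mul] at hmb
        rw [mul_comm]; exact hmb
      obtain ⟨v, hv⟩ := (IsLocalization.map_eq_zero_iff p.primeCompl Lp b).mp hb00
      exact ⟨v, v.2, hv⟩
  -- the content of g' is zero
  have hcg : orContent (R ⧸ I) g' = ⊥ := by
    rw [eq_bot_iff]
    intro b hb
    rw [Ideal.mem_bot]
    by_contra hb0
    set A := LinearMap.ker (LinearMap.mulLeft (R ⧸ I) b) with hAdef
    have hAne : A ≠ ⊤ := by
      intro htop
      apply hb0
      have h1 : (1 : R ⧸ I) ∈ A := htop ▸ Submodule.mem_top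
      simp only [hAdef, LinearMap.mem_ker, LinearMap.mulLeft_apply] at h1
      simpa using h1
    obtain ⟨mI, hm, hAm⟩ := Ideal.exists_le_maximal A hAne
    obtain ⟨v, hvP, hvb⟩ := key mI hm.isPrime b hb
    apply hvP
    apply hAm
    simp only [hAdef, LinearMap.mem_ker, LinearMap.mulLeft_apply]
    rw [mul_comm]; exact hvb
  apply hgne
  have hg := hORq g'
  rw [hcg, Ideal.map_bot] at hg
  simpa using hg
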